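/- Let u₁,…,uₙ, v₁,…,vₙ ∈ ℝ³ and set H = Σᵢ uᵢ vᵢᵀ with singular value decomposition H = U Σ Vᵀ where Σ has nonnegative decreasing diagonal. Then the rotation R* = V·diag(1,1,det(VUᵀ))·Uᵀ maximizes the functional R ↦ Σᵢ ⟨R uᵢ, vᵢ⟩ over R ∈ SO(3). -/

import Mathlib

open Matrix

private lemma kabsch_entry_le_one (M : Matrix (Fin 3) (Fin 3) ℝ) (h : M * Mᵀ = 1) (i : Fin 3) :
    M i i ≤ 1 := by
  have h1 : (M * Mᵀ) i i = (1 : Matrix (Fin 3) (Fin 3) ℝ) i i := by rw [h]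
  simp [Matrix.mul_apply, Fin.sum_univ_three, Matrix.one_apply] at h1
  fin_cases i <;> simp at h1 ⊢ <;> nlinarith [h1, sq_nonneg (M 0 0), sq_nonneg (M 1 1), sq_nonneg (M 2 2)]

private lemma kabsch_char_eval (M : Matrix (Fin 3) (Fin 3) ℝ) (l : ℝ) :
    (l • (1 : Matrix (Fin 3) (Fin 3) ℝ) - M).det =
      l^3 - trace M * l^2 + trace (adjugate M) * l - M.det := by
  simp [Matrix.det_fin_three, Matrix.trace_fin_three, Matrix.adjugate_fin_three,
    Matrix.smul_apply, Matrix.one_apply, Matrix.sub_apply]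
  ring

private lemma kabsch_adj_eq (M : Matrix (Fin 3) (Fin 3) ℝ) (h2 : Mᵀ * M = 1)
    (hdet : M.det = -1) : adjugate M = -Mᵀ := by
  have h := Matrix.mul_adjugate M
  rw [hdet] at h
  have : Mᵀ * (M * adjugate M) = Mᵀ * ((-1 : ℝ) • 1) := by rw [h]
  rw [← Matrix.mul_assoc, h2] at this
  simpa using this

private lemma kabsch_trace_le_one (M : Matrix (Fin 3) (Fin 3) ℝ)
    (h2 : Mᵀ * M = 1) (hdet : M.det = -1) : trace M ≤ 1 := by
  by_contra hc
  push_neg at hc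
  set t := trace M with ht
  have hs0 : (0:ℝ) ≤ (t+1)^2 - 4 := by nlinarith
  set s := Real.sqrt ((t+1)^2 - 4) with hsdef
  have hs : s^2 = (t+1)^2 - 4 := Real.sq_sqrt hs0
  have hsnn : 0 ≤ s := Real.sqrt_nonneg _
  set l := ((t+1) + s)/2 with hldef
  have hl1 : 1 < l := by nlinarith
  have hquad : l^2 - (t+1)*l + 1 = 0 := by rw [hldef]; nlinarith [hs]
  have hdet0 : (l • (1 : Matrix (Fin 3) (Fin 3) ℝ) - M).det = 0 := by
    rw [kabsch_char_eval, kabsch_adj_eq M h2 hdet, Matrix.trace_neg, Matrix.trace_transpose,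
      hdet, ← ht]
    nlinarith [hquad]
  obtain ⟨x, hx0, hx⟩ := (Matrix.exists_mulVec_eq_zero_iff).2 hdet0
  have heig : M.mulVec x = l • x := by
    rw [Matrix.sub_mulVec, Matrix.smul_mulVec, Matrix.one_mulVec, sub_eq_zero] at hx
    exact hx.symm
  have hnorm : dotProduct (M.mulVec x) (M.mulVec x) = dotProduct x x := by
    rw [Matrix.dotProduct_mulVec, ← Matrix.mulVec_transpose, Matrix.mulVec_mulVec, h2,
      Matrix.one_mulVec]
  rw [heig] at hnorm
  have hxx : 0 < dotProduct x x := by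
    have hnn : (0:ℝ) ≤ dotProduct x x := Finset.sum_nonneg fun i _ => mul_self_nonneg _
    rcases lt_or_eq_of_le hnn with h | h
    · exact h
    · exact absurd (dotProduct_self_eq_zero.1 h.symm) hx0
  have hkey : l^2 * dotProduct x x = dotProduct x x := by
    simpa [dotProduct_smul, smul_dotProduct, smul_eq_mul, mul_assoc, sq] using hnorm
  have hl2 : 1 < l^2 := by nlinarith
  nlinarith [mul_pos hxx (show (0:ℝ) < l^2 - 1 by linarith)]

private lemma kabsch_dot_eq_trace (R : Matrix (Fin 3) (Fin 3) ℝ) (a b : Fin 3 → ℝ) :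
    dotProduct (R.mulVec a) b = trace (R * vecMulVec a b) := by
  simp [Matrix.trace, Matrix.mul_apply, Matrix.vecMulVec_apply, Matrix.mulVec,
    dotProduct, Matrix.diag, Fin.sum_univ_three]
  ring

private lemma kabsch_trace_diag (N : Matrix (Fin 3) (Fin 3) ℝ) (σ : Fin 3 → ℝ) :
    trace (N * diagonal σ) = ∑ j, σ j * N j j := by
  simp [Matrix.trace, Matrix.mul_diagonal, Matrix.diag, mul_comm]

/-- Kabsch algorithm: if `H = Σᵢ uᵢ vᵢᵀ` has singular value decomposition `H = U Σ Vᵀ`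
with nonnegative decreasing diagonal `Σ`, then `R* = V·diag(1,1,det(V Uᵀ))·Uᵀ` is a rotation
maximizing `R ↦ Σᵢ ⟨R uᵢ, vᵢ⟩` over `SO(3)`. -/
theorem kabsch (n : ℕ) (u v : Fin n → Fin 3 → ℝ)
    (U V : Matrix (Fin 3) (Fin 3) ℝ) (σd : Fin 3 → ℝ)
    (hU : U ∈ Matrix.orthogonalGroup (Fin 3) ℝ)
    (hV : V ∈ Matrix.orthogonalGroup (Fin 3) ℝ)
    (hσpos : ∀ i, 0 ≤ σd i)
    (hσmono : ∀ i j : Fin 3, i ≤ j → σd j ≤ σd i)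
    (hH : (∑ i, vecMulVec (u i) (v i)) = U * Matrix.diagonal σd * Vᵀ) :
    (V * Matrix.diagonal (fun i : Fin 3 => if (i : ℕ) = 2 then (V * Uᵀ).det else 1) * Uᵀ)
        ∈ Matrix.specialOrthogonalGroup (Fin 3) ℝ ∧
      ∀ R ∈ Matrix.specialOrthogonalGroup (Fin 3) ℝ,
        ∑ i, dotProduct (R.mulVec (u i)) (v i) ≤
          ∑ i, dotProduct
            ((V * Matrix.diagonal (fun i : Fin 3 => if (i : ℕ) = 2 then (V * Uᵀ).det else 1)
              * Uᵀ).mulVec (u i)) (v i) := by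
  have hU1 : U * Uᵀ = 1 := by
    have h := (Matrix.mem_orthogonalGroup_iff (Fin 3) ℝ).1 hU
    exact h
  have hU2 : Uᵀ * U = 1 := by
    have h := (Matrix.mem_orthogonalGroup_iff' (Fin 3) ℝ).1 hU
    exact h
  have hV1 : V * Vᵀ = 1 := by
    have h := (Matrix.mem_orthogonalGroup_iff (Fin 3) ℝ).1 hV
    exact h
  have hV2 : Vᵀ * V = 1 := by
    have h := (Matrix.mem_orthogonalGroup_iff' (Fin 3) ℝ).1 hV
    exact h
  set c : ℝ := V.det * U.det with hcdef
  have hdU2 : U.det * U.det = 1 := by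
    have := congrArg Matrix.det hU1
    rwa [Matrix.det_mul, Matrix.det_transpose, Matrix.det_one] at this
  have hdV2 : V.det * V.det = 1 := by
    have := congrArg Matrix.det hV1
    rwa [Matrix.det_mul, Matrix.det_transpose, Matrix.det_one] at this
  have hcc : c * c = 1 := by
    calc c * c = (V.det * V.det) * (U.det * U.det) := by rw [hcdef]; ring
    _ = 1 := by rw [hdV2, hdU2, mul_one]
  have hdVU : (V * Uᵀ).det = c := by rw [Matrix.det_mul, Matrix.det_transpose]
  set f : Fin 3 → ℝ := fun i : Fin 3 => if (i : ℕ) = 2 then (V * Uᵀ).det else 1 with hfdef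
  set D : Matrix (Fin 3) (Fin 3) ℝ := Matrix.diagonal f with hDdef
  have hf0 : f 0 = 1 := by simp [hfdef]
  have hf1 : f 1 = 1 := by simp [hfdef]
  have hf2 : f 2 = c := by simp [hfdef, hdVU]
  have hDD : D * Dᵀ = 1 := by
    rw [hDdef, Matrix.diagonal_transpose, Matrix.diagonal_mul_diagonal]
    have hff : (fun i => f i * f i) = fun _ => (1:ℝ) := by
      funext i
      fin_cases i <;> simp [hfdef, hdVU, hcc]
    rw [hff]
    exact Matrix.diagonal_one
  have hdetD : D.det = c := by
    rw [hDdef, Matrix.det_diagonal, Fin.prod_univ_three, hf0, hf1, hf2]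
    ring
  -- membership of R* in SO(3)
  have hmem : (V * D * Uᵀ) ∈ Matrix.specialOrthogonalGroup (Fin 3) ℝ := by
    rw [Matrix.mem_specialOrthogonalGroup_iff]
    constructor
    · rw [Matrix.mem_orthogonalGroup_iff (Fin 3) ℝ]
      have e1 : (V * D * Uᵀ) * (V * D * Uᵀ)ᵀ = V * (D * (Uᵀ * (Uᵀᵀ * (Dᵀ * Vᵀ)))) := by
        simp only [Matrix.transpose_mul, Matrix.mul_assoc]
      rw [e1, Matrix.transpose_transpose, ← Matrix.mul_assoc Uᵀ U, hU2, Matrix.one_mul,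
        ← Matrix.mul_assoc D Dᵀ, hDD, Matrix.one_mul, hV1]
    · rw [Matrix.det_mul, Matrix.det_mul, Matrix.det_transpose, hdetD]
      calc V.det * c * U.det = c * c := by rw [hcdef]; ring
      _ = 1 := hcc
  refine ⟨hmem, ?_⟩
  intro R hR
  obtain ⟨hRo, hRdet⟩ := Matrix.mem_specialOrthogonalGroup_iff.1 hR
  have hR1 : R * Rᵀ = 1 := by
    have h := (Matrix.mem_orthogonalGroup_iff (Fin 3) ℝ).1 hRo
    exact h
  -- rewrite both sides as weighted diagonal sums
  have key : ∀ S : Matrix (Fin 3) (Fin 3) ℝ,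
      ∑ i, dotProduct (S.mulVec (u i)) (v i) = ∑ j, σd j * ((Vᵀ * S * U) j j) := by
    intro S
    calc ∑ i, dotProduct (S.mulVec (u i)) (v i)
        = ∑ i, trace (S * vecMulVec (u i) (v i)) := by
          exact Finset.sum_congr rfl fun i _ => kabsch_dot_eq_trace S (u i) (v i)
      _ = trace (S * ∑ i, vecMulVec (u i) (v i)) := by rw [Finset.mul_sum, Matrix.trace_sum]
      _ = trace ((S * U * Matrix.diagonal σd) * Vᵀ) := by
          rw [hH]; simp only [Matrix.mul_assoc]
      _ = trace ((Vᵀ * S * U) * Matrix.diagonal σd) := by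
          rw [Matrix.trace_mul_comm]; simp only [Matrix.mul_assoc]
      _ = ∑ j, σd j * ((Vᵀ * S * U) j j) := kabsch_trace_diag _ _
  rw [key R, key (V * D * Uᵀ)]
  have hMstar : Vᵀ * (V * D * Uᵀ) * U = D := by
    calc Vᵀ * (V * D * Uᵀ) * U = (Vᵀ * V) * (D * (Uᵀ * U)) := by simp only [Matrix.mul_assoc]
    _ = D := by rw [hV2, hU2, Matrix.one_mul, Matrix.mul_one]
  rw [hMstar]
  -- properties of M = Vᵀ R U
  set M : Matrix (Fin 3) (Fin 3) ℝ := Vᵀ * R * U with hMdef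
  have hM1 : M * Mᵀ = 1 := by
    have e1 : M * Mᵀ = Vᵀ * (R * (U * (Uᵀ * (Rᵀ * Vᵀᵀ)))) := by
      rw [hMdef]; simp only [Matrix.transpose_mul, Matrix.transpose_transpose, Matrix.mul_assoc]
    rw [e1, Matrix.transpose_transpose, ← Matrix.mul_assoc U Uᵀ, hU1, Matrix.one_mul,
      ← Matrix.mul_assoc R Rᵀ, hR1, Matrix.one_mul, hV2]
  have hM2 : Mᵀ * M = 1 := mul_eq_one_comm.1 hM1
  have hMdet : M.det = c := by
    rw [hMdef, Matrix.det_mul, Matrix.det_mul, Matrix.det_transpose, hRdet]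
    rw [hcdef]; ring
  -- final inequality
  have hb0 := kabsch_entry_le_one M hM1 0
  have hb1 := kabsch_entry_le_one M hM1 1
  have hb2 := kabsch_entry_le_one M hM1 2
  have hm01 : σd 1 ≤ σd 0 := hσmono 0 1 (by decide)
  have hm12 : σd 2 ≤ σd 1 := hσmono 1 2 (by decide)
  have hp2 : 0 ≤ σd 2 := hσpos 2
  have hD00 : D 0 0 = 1 := by rw [hDdef, Matrix.diagonal_apply_eq, hf0]
  have hD11 : D 1 1 = 1 := by rw [hDdef, Matrix.diagonal_apply_eq, hf1]
  have hD22 : D 2 2 = c := by rw [hDdef, Matrix.diagonal_apply_eq, hf2]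
  rw [Fin.sum_univ_three, Fin.sum_univ_three, hD00, hD11, hD22]
  rcases mul_self_eq_one_iff.1 hcc with hc1 | hc1
  · rw [hc1]
    nlinarith [mul_nonneg (hσpos 0) (sub_nonneg.2 hb0), mul_nonneg (hσpos 1) (sub_nonneg.2 hb1),
      mul_nonneg hp2 (sub_nonneg.2 hb2)]
  · rw [hc1]
    have htr : trace M ≤ 1 := kabsch_trace_le_one M hM2 (by rw [hMdet, hc1])
    rw [Matrix.trace_fin_three] at htr
    nlinarith [mul_nonneg (sub_nonneg.2 hm01) (sub_nonneg.2 hb0),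
      mul_nonneg (sub_nonneg.2 hm12) (show (0:ℝ) ≤ 2 - (M 0 0 + M 1 1) by linarith),
      mul_nonneg hp2 (show (0:ℝ) ≤ 1 - (M 0 0 + M 1 1 + M 2 2) by linarith)]
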